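/- arXiv:2507.05867 — 5 statements merged into one kernel-verified Lean document; each statement's English description precedes it below -/
import Mathlib

section
/- Let f : ℝ × ℝⁿ → ℝⁿ be continuous and T-periodic in its first argument (f(t + T, x) = f(t, x) for all t, x), with T > 0. Assume: (i) for every t₀ ∈ ℝ and x₀ ∈ ℝⁿ there exists a continuously differentiable global solution x : ℝ → ℝⁿ of ẋ(t) = f(t, x(t)) with x(t₀) = x₀; and (ii) there exist C ≥ 1 and ε > 0 such that any two global solutions x, x̃ satisfy ‖x(t) − x̃(t)‖ ≤ C e^{−ε(t − s)} ‖x(s) − x̃(s)‖ whenever t ≥ s. Then there exists a unique global solution x* that is T-periodic (x*(t + T) = x*(t) for all t ∈ ℝ), and every global solution x satisfies ‖x(t) − x*(t)‖ ≤ C e^{−ε t} ‖x(0) − x*(0)‖ for all t ≥ 0; in particular every solution converges to x* exponentially. -/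
open Set

/-- entrainment. For a continuous `T`-periodic vector field whose
flow exists globally and is incrementally exponentially stable, there is a unique
`T`-periodic global solution `x*`, and every global solution converges to it
exponentially: `‖x(t) − x*(t)‖ ≤ C e^{−εt} ‖x(0) − x*(0)‖` for `t ≥ 0`. -/
theorem entrainment_of_incrementally_stable_periodic_system
    (n : ℕ) (f : ℝ → EuclideanSpace ℝ (Fin n) → EuclideanSpace ℝ (Fin n))
    (T : ℝ) (hT : 0 < T)
    (hcont : Continuous fun p : ℝ × EuclideanSpace ℝ (Fin n) => f p.1 p.2)
    (hper : ∀ (t : ℝ) (x : EuclideanSpace ℝ (Fin n)), f (t + T) x = f t x)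
    (hexist : ∀ (t₀ : ℝ) (x₀ : EuclideanSpace ℝ (Fin n)),
      ∃ x : ℝ → EuclideanSpace ℝ (Fin n),
        x t₀ = x₀ ∧ ∀ t : ℝ, HasDerivAt x (f t (x t)) t)
    (C ε : ℝ) (hC : 1 ≤ C) (hε : 0 < ε)
    (hcontract : ∀ x xT : ℝ → EuclideanSpace ℝ (Fin n),
      (∀ t : ℝ, HasDerivAt x (f t (x t)) t) →
      (∀ t : ℝ, HasDerivAt xT (f t (xT t)) t) →
      ∀ s t : ℝ, s ≤ t →
        ‖x t - xT t‖ ≤ C * Real.exp (-ε * (t - s)) * ‖x s - xT s‖) :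
    ∃ xs : ℝ → EuclideanSpace ℝ (Fin n),
      (∀ t : ℝ, HasDerivAt xs (f t (xs t)) t) ∧
      (∀ t : ℝ, xs (t + T) = xs t) ∧
      (∀ x : ℝ → EuclideanSpace ℝ (Fin n),
        (∀ t : ℝ, HasDerivAt x (f t (x t)) t) →
        ((∀ t : ℝ, x (t + T) = x t) → x = xs) ∧
        (∀ t : ℝ, 0 ≤ t →
          ‖x t - xs t‖ ≤ C * Real.exp (-ε * t) * ‖x 0 - xs 0‖)) := by
  classical
  -- chosen solutions through (0, a)
  have sol : ∀ a : (EuclideanSpace ℝ (Fin n)), ∃ x : ℝ → (EuclideanSpace ℝ (Fin n)), x 0 = a ∧ ∀ t : ℝ, HasDerivAt x (f t (x t)) t :=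
    fun a => hexist 0 a
  let φ0 : (EuclideanSpace ℝ (Fin n)) → (ℝ → (EuclideanSpace ℝ (Fin n))) := fun a => (sol a).choose
  have hφ0_init : ∀ a, φ0 a 0 = a := fun a => (sol a).choose_spec.1
  have hφ0_sol : ∀ a t, HasDerivAt (φ0 a) (f t (φ0 a t)) t := fun a => (sol a).choose_spec.2
  -- forward uniqueness
  have huniq : ∀ x y : ℝ → (EuclideanSpace ℝ (Fin n)), (∀ t, HasDerivAt x (f t (x t)) t) →
      (∀ t, HasDerivAt y (f t (y t)) t) → ∀ s t : ℝ, s ≤ t → x s = y s → x t = y t := by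
    intro x y hx hy s t hst hxy
    have h := hcontract x y hx hy s t hst
    rw [hxy, sub_self, norm_zero, mul_zero] at h
    have := norm_le_zero_iff.mp h
    exact sub_eq_zero.mp this
  -- periodicity of f for integer multiples
  have hperZ : ∀ (m : ℤ) (t : ℝ) (x : (EuclideanSpace ℝ (Fin n))), f (t + m * T) x = f t x := by
    intro m t x
    have hp : Function.Periodic (fun t => f t x) T := fun t => hper t x
    exact hp.int_mul m t
  -- shifted solutions
  have hshift : ∀ (x : ℝ → (EuclideanSpace ℝ (Fin n))), (∀ t, HasDerivAt x (f t (x t)) t) → ∀ (m : ℤ) (t : ℝ),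
      HasDerivAt (fun s => x (s + m * T)) (f t (x (t + m * T))) t := by
    intro x hx m t
    have h1 : HasDerivAt (fun s : ℝ => s + m * T) 1 t := (hasDerivAt_id t).add_const _
    have h2 := HasDerivAt.scomp t (hx (t + m * T)) h1
    rw [one_smul] at h2
    rw [hperZ] at h2
    exact h2
  have hshift_sol : ∀ (x : ℝ → (EuclideanSpace ℝ (Fin n))), (∀ t, HasDerivAt x (f t (x t)) t) → ∀ (m : ℤ) (t : ℝ),
      HasDerivAt (fun s => x (s + m * T)) (f t ((fun s => x (s + m * T)) t)) t := by
    intro x hx m t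
    exact hshift x hx m t
  -- Poincaré map
  let P : (EuclideanSpace ℝ (Fin n)) → (EuclideanSpace ℝ (Fin n)) := fun a => φ0 a T
  have hPval : ∀ (x : ℝ → (EuclideanSpace ℝ (Fin n))), (∀ t, HasDerivAt x (f t (x t)) t) → x T = P (x 0) := by
    intro x hx
    exact huniq x (φ0 (x 0)) hx (hφ0_sol _) 0 T hT.le (hφ0_init _).symm
  have hPiter : ∀ (x : ℝ → (EuclideanSpace ℝ (Fin n))), (∀ t, HasDerivAt x (f t (x t)) t) → ∀ k : ℕ,
      x (k * T) = P^[k] (x 0) := by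
    intro x hx k
    induction k generalizing x with
    | zero => simp
    | succ k ih =>
      have hψ := hshift_sol x hx 1
      have h := ih _ hψ
      simp only [Int.cast_one, one_mul, zero_add] at h
      rw [hPval x hx] at h
      rw [Function.iterate_succ_apply, ← h]
      congr 1
      push_cast
      ring
  -- choose k with contraction constant < 1
  obtain ⟨k, hk⟩ := exists_nat_gt (C / (ε * T))
  have hεT : 0 < ε * T := mul_pos hε hT
  have hkT : 0 ≤ (k : ℝ) * T := mul_nonneg (Nat.cast_nonneg k) hT.le
  have hKlt : C * Real.exp (-ε * ((k : ℝ) * T)) < 1 := by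
    have h1 : C < ε * ((k:ℝ) * T) := by
      have := (div_lt_iff₀ hεT).mp hk
      nlinarith
    have h2 : C < Real.exp (ε * ((k:ℝ) * T)) := by
      have := Real.add_one_le_exp (ε * ((k:ℝ) * T))
      nlinarith
    rw [neg_mul, Real.exp_neg, mul_inv_lt_iff₀' (Real.exp_pos _), mul_one]
    exact h2
  have hKnonneg : 0 ≤ C * Real.exp (-ε * ((k : ℝ) * T)) := by positivity
  set Kc : ℝ := C * Real.exp (-ε * ((k : ℝ) * T)) with hKc
  -- Q := P^[k] is a contraction
  let K : NNReal := ⟨Kc, hKnonneg⟩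
  have hQlip : ∀ a b : (EuclideanSpace ℝ (Fin n)), ‖P^[k] a - P^[k] b‖ ≤ Kc * ‖a - b‖ := by
    intro a b
    have h1 := hcontract (φ0 a) (φ0 b) (hφ0_sol a) (hφ0_sol b) 0 ((k:ℝ) * T) hkT
    rw [hφ0_init, hφ0_init, sub_zero] at h1
    have e1 := hPiter (φ0 a) (hφ0_sol a) k
    rw [hφ0_init] at e1
    have e2 := hPiter (φ0 b) (hφ0_sol b) k
    rw [hφ0_init] at e2
    rw [← e1, ← e2]
    exact h1
  have hQ : ContractingWith K (P^[k]) := by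
    constructor
    · exact_mod_cast hKlt
    · apply LipschitzWith.of_dist_le_mul
      intro a b
      rw [dist_eq_norm, dist_eq_norm]
      exact hQlip a b
  let a : (EuclideanSpace ℝ (Fin n)) := ContractingWith.fixedPoint (P^[k]) hQ
  have ha : P^[k] a = a := hQ.fixedPoint_isFixedPt
  have hPa : P a = a := by
    have hfix : Function.IsFixedPt (P^[k]) (P a) := by
      show P^[k] (P a) = P a
      rw [← Function.iterate_succ_apply, Function.iterate_succ_apply', ha]
    calc P a = ContractingWith.fixedPoint (P^[k]) hQ := hQ.fixedPoint_unique hfix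
    _ = a := rfl
  -- the solution through a
  set φ : ℝ → (EuclideanSpace ℝ (Fin n)) := φ0 a with hφdef
  have hφ0' : φ 0 = a := hφ0_init a
  have hφsol : ∀ t, HasDerivAt φ (f t (φ t)) t := hφ0_sol a
  have hφT : φ T = a := by
    have := hPval φ hφsol
    rw [hφ0'] at this
    rw [this, hPa]
  -- forward periodicity
  have hfwd : ∀ s : ℝ, 0 ≤ s → φ (s + T) = φ s := by
    intro s hs
    have hψ := hshift_sol φ hφsol 1
    have hψ0 : (fun u => φ (u + (1:ℤ) * T)) 0 = φ 0 := by
      simp only [zero_add, Int.cast_one, one_mul]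
      rw [hφT, hφ0']
    have := huniq _ φ hψ hφsol 0 s hs hψ0
    simpa using this
  have hmulN : ∀ (m : ℕ) (s : ℝ), 0 ≤ s → φ (s + m * T) = φ s := by
    intro m
    induction m with
    | zero => intro s hs; simp
    | succ m ih =>
      intro s hs
      have h1 : s + ((m : ℝ) + 1) * T = (s + m * T) + T := by ring
      push_cast
      rw [h1, hfwd (s + m * T) (by positivity), ih s hs]
  have hZ : ∀ u v : ℝ, 0 ≤ u → 0 ≤ v → (∃ m : ℤ, u = v + m * T) → φ u = φ v := by
    intro u v hu hv ⟨m, hm⟩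
    rcases le_or_gt 0 m with h | h
    · have : u = v + (m.toNat : ℝ) * T := by
        rw [hm]; congr 1; congr 1; exact_mod_cast (Int.toNat_of_nonneg h).symm
      rw [this, hmulN m.toNat v hv]
    · have : v = u + ((-m).toNat : ℝ) * T := by
        have h' : ((-m).toNat : ℝ) = -(m : ℝ) := by
          exact_mod_cast Int.toNat_of_nonneg (by omega : (0:ℤ) ≤ -m)
        rw [h', hm]; ring
      rw [this, hmulN (-m).toNat u hu]
  -- the periodic solution
  set xs : ℝ → (EuclideanSpace ℝ (Fin n)) := fun t => φ (t - ⌊t / T⌋ * T) with hxsdef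
  have harg_nonneg : ∀ t : ℝ, 0 ≤ t - ⌊t / T⌋ * T := by
    intro t
    have h1 : (⌊t / T⌋ : ℝ) ≤ t / T := Int.floor_le _
    have h2 : (⌊t / T⌋ : ℝ) * T ≤ t := by
      calc (⌊t / T⌋ : ℝ) * T ≤ (t / T) * T := by nlinarith
      _ = t := by field_simp
    linarith
  -- local representation of xs near a point
  have hxs_local : ∀ t₀ t : ℝ, t₀ - T < t → xs t = φ (t + ((-(⌊t₀ / T⌋ - 1) : ℤ) : ℝ) * T) := by
    intro t₀ t ht
    apply hZ
    · exact harg_nonneg t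
    · have h1 : 0 ≤ t₀ - ⌊t₀ / T⌋ * T := harg_nonneg t₀
      have : t + (-(⌊t₀ / T⌋ - 1) : ℤ) * T = (t - t₀) + (t₀ - ⌊t₀ / T⌋ * T) + T := by
        push_cast; ring
      rw [this]; linarith
    · exact ⟨(⌊t₀ / T⌋ - 1) - ⌊t / T⌋, by push_cast; ring⟩
  have hxs_sol : ∀ t : ℝ, HasDerivAt xs (f t (xs t)) t := by
    intro t₀
    have hg := hshift_sol φ hφsol (-(⌊t₀ / T⌋ - 1)) t₀
    have heq : xs =ᶠ[nhds t₀] (fun s => φ (s + (-(⌊t₀ / T⌋ - 1) : ℤ) * T)) := by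
      filter_upwards [Ioi_mem_nhds (show t₀ - T < t₀ by linarith)] with t ht
      exact hxs_local t₀ t ht
    have h1 : φ (t₀ + (-(⌊t₀ / T⌋ - 1) : ℤ) * T) = xs t₀ :=
      (hxs_local t₀ t₀ (by linarith)).symm
    have h2 := hg.congr_of_eventuallyEq heq
    beta_reduce at h2
    rwa [h1] at h2
  have hxs_per : ∀ t : ℝ, xs (t + T) = xs t := by
    intro t
    show φ (t + T - ⌊(t + T) / T⌋ * T) = φ (t - ⌊t / T⌋ * T)
    have h1 : (t + T) / T = t / T + 1 := by field_simp
    rw [h1, Int.floor_add_one]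
    congr 1
    push_cast
    ring
  refine ⟨xs, hxs_sol, hxs_per, ?_⟩
  intro x hx
  constructor
  · -- uniqueness among periodic solutions
    intro hxper
    funext t
    have hxP : Function.Periodic x T := hxper
    have hxsP : Function.Periodic xs T := hxs_per
    have h := hcontract x xs hx hxs_sol (t - k * T) t (by linarith)
    rw [hxP.sub_nat_mul_eq k, hxsP.sub_nat_mul_eq k] at h
    have harg : t - (t - (k:ℝ) * T) = (k:ℝ) * T := by ring
    rw [harg] at h
    have hd : 0 ≤ ‖x t - xs t‖ := norm_nonneg _
    have : ‖x t - xs t‖ = 0 := by nlinarith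
    exact sub_eq_zero.mp (norm_eq_zero.mp this)
  · intro t ht
    have h := hcontract x xs hx hxs_sol 0 t ht
    rwa [sub_zero] at h
end

section
/- Let c > 0 and let f : ℝ × ℝⁿ → ℝⁿ satisfy the one-sided Lipschitz (strong contraction) condition ⟨f(t, a) − f(t, b), a − b⟩ ≤ −c ‖a − b‖² for all t ∈ ℝ and a, b ∈ ℝⁿ. Let d, d̃ : [0,∞) → ℝⁿ be continuous, and let x, x̃ : [0,∞) → ℝⁿ be continuously differentiable with ẋ(t) = f(t, x(t)) + d(t) and ẋ̃(t) = f(t, x̃(t)) + d̃(t) for all t ≥ 0. Then for all t ≥ 0: ‖x(t) − x̃(t)‖ ≤ e^{−ct} ‖x(0) − x̃(0)‖ + (1/c) · sup_{s ∈ [0,t]} ‖d(s) − d̃(s)‖. -/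
open Set

/-- incremental input-to-state estimate for strongly contracting
systems. If `⟨f(t,a) − f(t,b), a − b⟩ ≤ −c‖a − b‖²` and `x, x̃` solve
`ẋ = f(t,x) + d(t)`, `ẋ̃ = f(t,x̃) + d̃(t)` on `[0,∞)` with continuous disturbances
`d, d̃`, then `‖x(t) − x̃(t)‖ ≤ e^{−ct}‖x(0) − x̃(0)‖ + (1/c) sup_{s∈[0,t]} ‖d(s) − d̃(s)‖`. -/
theorem contraction_incremental_iss_estimate
    (n : ℕ) (c : ℝ) (hc : 0 < c)
    (f : ℝ → EuclideanSpace ℝ (Fin n) → EuclideanSpace ℝ (Fin n))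
    (hf : ∀ (t : ℝ) (a b : EuclideanSpace ℝ (Fin n)),
      inner ℝ (f t a - f t b) (a - b) ≤ -c * ‖a - b‖ ^ 2)
    (d dT : ℝ → EuclideanSpace ℝ (Fin n))
    (hd : ContinuousOn d (Ici 0)) (hdT : ContinuousOn dT (Ici 0))
    (x xT : ℝ → EuclideanSpace ℝ (Fin n))
    (hx : ∀ t ∈ Ici (0 : ℝ), HasDerivWithinAt x (f t (x t) + d t) (Ici 0) t)
    (hxT : ∀ t ∈ Ici (0 : ℝ), HasDerivWithinAt xT (f t (xT t) + dT t) (Ici 0) t) :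
    ∀ t ∈ Ici (0 : ℝ),
      ‖x t - xT t‖ ≤ Real.exp (-c * t) * ‖x 0 - xT 0‖ +
        (1 / c) * sSup ((fun s => ‖d s - dT s‖) '' Icc 0 t) := by
  intro t ht
  rw [mem_Ici] at ht
  set u : ℝ → EuclideanSpace ℝ (Fin n) := fun s => x s - xT s with hu
  set u' : ℝ → EuclideanSpace ℝ (Fin n) :=
    fun s => (f s (x s) + d s) - (f s (xT s) + dT s) with hu'
  have hud : ∀ s ∈ Ici (0:ℝ), HasDerivWithinAt u (u' s) (Ici 0) s :=
    fun s hs => (hx s hs).sub (hxT s hs)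
  set M : ℝ := sSup ((fun s => ‖d s - dT s‖) '' Icc 0 t) with hM
  have hcont : ContinuousOn (fun s => ‖d s - dT s‖) (Icc 0 t) :=
    ((hd.sub hdT).norm).mono Icc_subset_Ici_self
  have hbdd : BddAbove ((fun s => ‖d s - dT s‖) '' Icc 0 t) :=
    (isCompact_Icc.image_of_continuousOn hcont).bddAbove
  have hMle : ∀ s ∈ Icc (0:ℝ) t, ‖d s - dT s‖ ≤ M :=
    fun s hs => le_csSup hbdd (mem_image_of_mem _ hs)
  have hM0 : 0 ≤ M := le_trans (norm_nonneg _) (hMle 0 ⟨le_refl 0, ht⟩)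
  -- continuity of u on Icc 0 t
  have hucont : ContinuousOn u (Icc 0 t) := fun s hs =>
    ((hud s hs.1).continuousWithinAt).mono Icc_subset_Ici_self
  -- main ε-estimate
  have key : ∀ ε > (0:ℝ), ‖u t‖ ≤ Real.exp (-c * t) * (‖u 0‖ + ε) + (M + c * ε) / c := by
    intro ε hε
    set g : ℝ → ℝ := fun s => (inner ℝ (u s) (u s) : ℝ) + ε ^ 2 with hg
    have hgpos : ∀ s, 0 < g s := by
      intro s
      have : (0:ℝ) ≤ inner ℝ (u s) (u s) := real_inner_self_nonneg
      positivity
    set h : ℝ → ℝ := fun s => Real.sqrt (g s) with hh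
    have hhe : ∀ s, ε ≤ h s := by
      intro s
      have : ε = Real.sqrt (ε ^ 2) := by
        rw [Real.sqrt_sq hε.le]
      rw [this]
      apply Real.sqrt_le_sqrt
      have : (0:ℝ) ≤ inner ℝ (u s) (u s) := real_inner_self_nonneg
      simp only [hg]; linarith
    have hhn : ∀ s, ‖u s‖ ≤ h s := by
      intro s
      have h1 : ‖u s‖ = Real.sqrt ((inner ℝ (u s) (u s) : ℝ)) := by
        rw [real_inner_self_eq_norm_sq, Real.sqrt_sq (norm_nonneg _)]
      rw [h1]
      apply Real.sqrt_le_sqrt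
      simp only [hg]; nlinarith
    set D : ℝ → ℝ := fun s =>
      1 / (2 * Real.sqrt (g s)) * ((inner ℝ (u s) (u' s) : ℝ) + inner ℝ (u' s) (u s)) with hD
    have hDeriv : ∀ s ∈ Ici (0:ℝ), HasDerivWithinAt h (D s) (Ici 0) s := by
      intro s hs
      have h1 : HasDerivWithinAt g ((inner ℝ (u s) (u' s) : ℝ) + inner ℝ (u' s) (u s)) (Ici 0) s := by
        have := ((hud s hs).inner ℝ (hud s hs)).add_const (ε ^ 2)
        exact this
      exact (Real.hasDerivAt_sqrt (hgpos s).ne').comp_hasDerivWithinAt s h1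
    have hbound : ∀ s ∈ Ico (0:ℝ) t, D s ≤ (-c) * h s + (M + c * ε) := by
      intro s hs
      have hsIcc : s ∈ Icc (0:ℝ) t := ⟨hs.1, hs.2.le⟩
      have hinner : (inner ℝ (u' s) (u s) : ℝ) ≤ -c * ‖u s‖ ^ 2 + M * ‖u s‖ := by
        have heq : u' s = (f s (x s) - f s (xT s)) + (d s - dT s) := by
          simp only [hu']; abel
        rw [heq, inner_add_left]
        have h1 : (inner ℝ (f s (x s) - f s (xT s)) (u s) : ℝ) ≤ -c * ‖u s‖ ^ 2 :=
          hf s (x s) (xT s)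
        have h2 : (inner ℝ (d s - dT s) (u s) : ℝ) ≤ M * ‖u s‖ := by
          calc (inner ℝ (d s - dT s) (u s) : ℝ) ≤ ‖d s - dT s‖ * ‖u s‖ := real_inner_le_norm _ _
            _ ≤ M * ‖u s‖ := by
                apply mul_le_mul_of_nonneg_right (hMle s hsIcc) (norm_nonneg _)
        linarith
      have hcomm : (inner ℝ (u s) (u' s) : ℝ) = inner ℝ (u' s) (u s) := real_inner_comm _ _
      have hhpos : 0 < h s := lt_of_lt_of_le hε (hhe s)
      have hsq : h s ^ 2 = g s := Real.sq_sqrt (hgpos s).le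
      have hD' : D s = (inner ℝ (u' s) (u s) : ℝ) / h s := by
        simp only [hD, hcomm, hh]
        field_simp
        ring
      rw [hD']
      rw [div_le_iff₀ hhpos]
      have hun : ‖u s‖ ≤ h s := hhn s
      have hue : ε ≤ h s := hhe s
      have hg' : h s ^ 2 = ‖u s‖ ^ 2 + ε ^ 2 := by
        rw [hsq]; simp only [hg, real_inner_self_eq_norm_sq]
      nlinarith [norm_nonneg (u s), hinner, mul_le_mul_of_nonneg_left hun hM0,
        mul_le_mul_of_nonneg_left hue (by positivity : (0:ℝ) ≤ c * ε)]
    have hhcont : ContinuousOn h (Icc 0 t) := by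
      apply Real.continuous_sqrt.comp_continuousOn
      exact ((hucont.inner hucont).add continuousOn_const)
    have hh0 : h 0 ≤ ‖u 0‖ + ε := by
      have : h 0 ^ 2 = ‖u 0‖ ^ 2 + ε ^ 2 := by
        rw [hh, Real.sq_sqrt (hgpos 0).le]; simp only [hg, real_inner_self_eq_norm_sq]
      nlinarith [hhe 0, norm_nonneg (u 0), lt_of_lt_of_le hε (hhe 0)]
    have hgron := le_gronwallBound_of_liminf_deriv_right_le hhcont
      (fun s hs r hr => ((hDeriv s hs.1).mono (Ici_subset_Ici.2 hs.1)).liminf_right_slope_le hr)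
      hh0 hbound t ⟨ht, le_refl t⟩
    rw [gronwallBound_of_K_ne_0 (neg_ne_zero.2 hc.ne')] at hgron
    have hexp : Real.exp (-c * t) ≤ 1 := by
      apply Real.exp_le_one_iff.2
      nlinarith
    calc ‖u t‖ ≤ h t := hhn t
      _ ≤ (‖u 0‖ + ε) * Real.exp (-c * (t - 0)) +
          (M + c * ε) / (-c) * (Real.exp (-c * (t - 0)) - 1) := hgron
      _ ≤ Real.exp (-c * t) * (‖u 0‖ + ε) + (M + c * ε) / c := by
          rw [sub_zero]
          have h1 : (M + c * ε) / (-c) * (Real.exp (-c * t) - 1)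
              = (M + c * ε) / c * (1 - Real.exp (-c * t)) := by
            rw [div_neg]; ring
          rw [h1]
          have h2 : 0 ≤ (M + c * ε) / c := by positivity
          nlinarith [Real.exp_pos (-c * t)]
  -- pass to the limit ε → 0
  have final : ‖u t‖ ≤ Real.exp (-c * t) * ‖u 0‖ + (1 / c) * M := by
    apply le_of_forall_pos_le_add
    intro δ hδ
    have hε : (0:ℝ) < δ / 2 := by linarith
    have := key (δ / 2) hε
    have hexp : Real.exp (-c * t) ≤ 1 := by
      apply Real.exp_le_one_iff.2; nlinarith
    have hexp0 : 0 < Real.exp (-c * t) := Real.exp_pos _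
    have h3 : Real.exp (-c * t) * (δ / 2) ≤ δ / 2 :=
      mul_le_of_le_one_left (by linarith) hexp
    have h5 : (M + c * (δ / 2)) / c = M / c + δ / 2 := by field_simp
    have h4 : (1 / c) * M = M / c := by ring
    have k := key (δ / 2) hε
    rw [h5, mul_add] at k
    rw [h4]
    linarith
  exact final
end

section
/- Let c > 0 and let f : ℝ × ℝⁿ → ℝⁿ satisfy ⟨f(t, a) − f(t, b), a − b⟩ ≤ −c ‖a − b‖² for all t ∈ ℝ and a, b ∈ ℝⁿ, and additionally f(t, 0) = 0 for all t ∈ ℝ. Let d : [0,∞) → ℝⁿ be continuous and let x : [0,∞) → ℝⁿ be continuously differentiable with ẋ(t) = f(t, x(t)) + d(t) for all t ≥ 0. Then for all t ≥ 0: ‖x(t)‖ ≤ e^{−ct} ‖x(0)‖ + (1/c) · sup_{s ∈ [0,t]} ‖d(s)‖. -/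
open Set

/-- input-to-state estimate for a strongly contracting vector field
vanishing at the origin. If `⟨f(t,a) − f(t,b), a − b⟩ ≤ −c‖a − b‖²`, `f(t,0) = 0`,
and `x` solves `ẋ = f(t,x) + d(t)` on `[0,∞)` with `d` continuous, then
`‖x(t)‖ ≤ e^{−ct}‖x(0)‖ + (1/c) sup_{s∈[0,t]} ‖d(s)‖`. -/
theorem contraction_iss_estimate_origin
    (n : ℕ) (c : ℝ) (hc : 0 < c)
    (f : ℝ → EuclideanSpace ℝ (Fin n) → EuclideanSpace ℝ (Fin n))
    (hf : ∀ (t : ℝ) (a b : EuclideanSpace ℝ (Fin n)),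
      inner ℝ (f t a - f t b) (a - b) ≤ -c * ‖a - b‖ ^ 2)
    (hf0 : ∀ t : ℝ, f t 0 = 0)
    (d : ℝ → EuclideanSpace ℝ (Fin n)) (hd : ContinuousOn d (Ici 0))
    (x : ℝ → EuclideanSpace ℝ (Fin n))
    (hx : ∀ t ∈ Ici (0 : ℝ), HasDerivWithinAt x (f t (x t) + d t) (Ici 0) t) :
    ∀ t ∈ Ici (0 : ℝ),
      ‖x t‖ ≤ Real.exp (-c * t) * ‖x 0‖ +
        (1 / c) * sSup ((fun s => ‖d s‖) '' Icc 0 t) := by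
  intro t ht
  have ht0 : (0:ℝ) ≤ t := ht
  set M : ℝ := sSup ((fun s => ‖d s‖) '' Icc 0 t) with hM
  have hcompact : IsCompact ((fun s => ‖d s‖) '' Icc 0 t) :=
    (isCompact_Icc).image_of_continuousOn
      ((hd.mono (Icc_subset_Ici_self)).norm)
  have hdM : ∀ s ∈ Icc (0:ℝ) t, ‖d s‖ ≤ M :=
    fun s hs => le_csSup hcompact.bddAbove ⟨s, hs, rfl⟩
  have hM0 : 0 ≤ M := le_trans (norm_nonneg _) (hdM 0 (by simp [ht0]))
  have hxc : ContinuousOn x (Ici 0) := fun s hs => (hx s hs).continuousWithinAt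
  -- key estimate with ε
  have key : ∀ ε > (0:ℝ), Real.exp (c*t) * ‖x t‖ ≤
      (‖x 0‖ + ε) + (M+ε)/c * (Real.exp (c*t) - 1) := by
    intro ε hε
    set A : ℝ → ℝ := fun s => (‖x 0‖ + ε) + (M+ε)/c * (Real.exp (c*s) - 1) with hA
    have hApos : ∀ s, 0 ≤ s → 0 < A s := by
      intro s hs
      have h1 : (1:ℝ) ≤ Real.exp (c*s) := by
        rw [Real.one_le_exp_iff]; positivity
      have : 0 ≤ (M+ε)/c * (Real.exp (c*s) - 1) := by
        apply mul_nonneg (by positivity) (by linarith)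
      have := norm_nonneg (x 0)
      simp only [hA]; linarith
    have hA' : ∀ s : ℝ, HasDerivAt A ((M+ε) * Real.exp (c*s)) s := by
      intro s
      have h1 : HasDerivAt (fun s : ℝ => Real.exp (c*s)) (Real.exp (c*s) * c) s :=
        (Real.hasDerivAt_exp (c*s)).comp s (by simpa using (hasDerivAt_id s).const_mul c)
      have h2 : HasDerivAt A ((M+ε)/c * (Real.exp (c*s) * c)) s :=
        ((h1.sub_const 1).const_mul ((M+ε)/c)).const_add (‖x 0‖ + ε)
      convert h2 using 1
      field_simp
    set B : ℝ → ℝ := fun s => (A s)^2 with hB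
    have hB' : ∀ s : ℝ, HasDerivAt B (2 * A s * ((M+ε) * Real.exp (c*s))) s := by
      intro s
      have := (hA' s).fun_pow 2
      simpa [hB, mul_comm, mul_assoc, mul_left_comm] using this
    set ψ : ℝ → ℝ := fun s => Real.exp (2*c*s) * ‖x s‖^2 with hψ
    have hψ' : ∀ s ∈ Ico (0:ℝ) t, HasDerivWithinAt ψ
        (2*c*Real.exp (2*c*s) * ‖x s‖^2 +
          Real.exp (2*c*s) * (2 * inner ℝ (f s (x s) + d s) (x s))) (Ici s) s := by
      intro s hs
      have hxs : HasDerivWithinAt x (f s (x s) + d s) (Ici s) s :=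
        (hx s hs.1).mono (Ici_subset_Ici.2 hs.1)
      have hq : HasDerivWithinAt (fun u => (inner ℝ (x u) (x u) : ℝ))
          ((inner ℝ (x s) (f s (x s) + d s) : ℝ) + inner ℝ (f s (x s) + d s) (x s)) (Ici s) s :=
        HasDerivWithinAt.inner ℝ hxs hxs
      have he : HasDerivWithinAt (fun u : ℝ => Real.exp (2*c*u))
          (Real.exp (2*c*s) * (2*c)) (Ici s) s :=
        ((Real.hasDerivAt_exp (2*c*s)).comp s
          (by simpa using (hasDerivAt_id s).const_mul (2*c))).hasDerivWithinAt
      have hmul := he.fun_mul hq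
      have heq : ψ = fun u => Real.exp (2*c*u) * (inner ℝ (x u) (x u) : ℝ) := by
        funext u
        rw [hψ, real_inner_self_eq_norm_sq]
      rw [heq]
      refine hmul.congr_deriv ?_
      rw [real_inner_self_eq_norm_sq, real_inner_comm (x s)]
      ring
    have hψc : ContinuousOn ψ (Icc 0 t) := by
      apply ContinuousOn.mul
        (Real.continuous_exp.comp (continuous_const.mul continuous_id)).continuousOn
      exact ((hxc.mono Icc_subset_Ici_self).norm).pow 2
    have hBc : ContinuousOn B (Icc 0 t) :=
      fun s _ => (hB' s).continuousAt.continuousWithinAt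
    have ha : ψ 0 ≤ B 0 := by
      simp only [hψ, hB, hA, mul_zero, Real.exp_zero]
      have := norm_nonneg (x 0)
      nlinarith
    have bound : ∀ s ∈ Ico (0:ℝ) t, ψ s = B s →
        (2*c*Real.exp (2*c*s) * ‖x s‖^2 +
          Real.exp (2*c*s) * (2 * inner ℝ (f s (x s) + d s) (x s)))
        < 2 * A s * ((M+ε) * Real.exp (c*s)) := by
      intro s hs hsb
      have hEs : Real.exp (2*c*s) = Real.exp (c*s) ^ 2 := by
        rw [← Real.exp_nat_mul]; ring_nf
      have hEc : (0:ℝ) < Real.exp (c*s) := Real.exp_pos _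
      have hApos' := hApos s hs.1
      have hxA : Real.exp (c*s) * ‖x s‖ = A s := by
        have h1 : (Real.exp (c*s) * ‖x s‖)^2 = (A s)^2 := by
          rw [mul_pow, ← hEs]; exact hsb
        have h2 : (0:ℝ) ≤ Real.exp (c*s) * ‖x s‖ := by positivity
        calc Real.exp (c*s) * ‖x s‖
            = Real.sqrt ((Real.exp (c*s) * ‖x s‖)^2) := (Real.sqrt_sq h2).symm
          _ = Real.sqrt ((A s)^2) := by rw [h1]
          _ = A s := Real.sqrt_sq hApos'.le
      have hfx : (inner ℝ (f s (x s)) (x s) : ℝ) ≤ -c * ‖x s‖^2 := by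
        have := hf s (x s) 0
        simpa [hf0 s] using this
      have hdx : (inner ℝ (d s) (x s) : ℝ) ≤ M * ‖x s‖ :=
        le_trans (real_inner_le_norm _ _)
          (mul_le_mul_of_nonneg_right (hdM s ⟨hs.1, hs.2.le⟩) (norm_nonneg _))
      have hinner : (inner ℝ (f s (x s) + d s) (x s) : ℝ) ≤ -c * ‖x s‖^2 + M * ‖x s‖ := by
        rw [inner_add_left]
        exact add_le_add hfx hdx
      set I : ℝ := (inner ℝ (f s (x s) + d s) (x s) : ℝ) with hI
      set X : ℝ := ‖x s‖ with hX
      set E : ℝ := Real.exp (c*s) with hE2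
      have hstep : 2*c*(E^2) * X^2 + (E^2) * (2 * I) ≤ 2 * M * (E * (E * X)) := by
        have h5 := mul_le_mul_of_nonneg_left hinner
          (by positivity : (0:ℝ) ≤ 2 * E^2)
        nlinarith [h5]
      rw [hEs]
      refine lt_of_le_of_lt hstep ?_
      have hxAE : E * X = A s := hxA
      rw [hxAE]
      calc 2 * M * (E * A s) < 2 * (M+ε) * (E * A s) :=
            mul_lt_mul_of_pos_right (by linarith) (mul_pos hEc hApos')
        _ = 2 * A s * ((M+ε) * E) := by ring
    have hfin := image_le_of_deriv_right_lt_deriv_boundary' hψc hψ' ha hBc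
      (fun s _ => (hB' s).hasDerivWithinAt) bound (right_mem_Icc.2 ht0)
    -- hfin : ψ t ≤ B t
    have hEs : Real.exp (2*c*t) = Real.exp (c*t) ^ 2 := by
      rw [← Real.exp_nat_mul]; ring_nf
    have h1 : (Real.exp (c*t) * ‖x t‖)^2 ≤ (A t)^2 := by
      calc (Real.exp (c*t) * ‖x t‖)^2 = ψ t := by simp only [hψ]; rw [hEs]; ring
        _ ≤ B t := hfin
        _ = (A t)^2 := rfl
    have h2 : (0:ℝ) ≤ Real.exp (c*t) * ‖x t‖ := by positivity
    calc Real.exp (c*t) * ‖x t‖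
        = Real.sqrt ((Real.exp (c*t) * ‖x t‖)^2) := (Real.sqrt_sq h2).symm
      _ ≤ Real.sqrt ((A t)^2) := Real.sqrt_le_sqrt h1
      _ = A t := Real.sqrt_sq (hApos t ht0).le
  -- take ε → 0
  have lim : Real.exp (c*t) * ‖x t‖ ≤ ‖x 0‖ + M/c * (Real.exp (c*t) - 1) := by
    have hcont : Filter.Tendsto (fun ε : ℝ => (‖x 0‖ + ε) + (M+ε)/c * (Real.exp (c*t) - 1))
        (nhdsWithin 0 (Ioi 0)) (nhds (‖x 0‖ + M/c * (Real.exp (c*t) - 1))) := by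
      have hcts : Continuous (fun ε : ℝ => (‖x 0‖ + ε) + (M+ε)/c * (Real.exp (c*t) - 1)) :=
        (continuous_const.add continuous_id).add
          (((continuous_const.add continuous_id).div_const c).mul continuous_const)
      have h0 := hcts.tendsto 0
      simp only [add_zero] at h0
      exact h0.mono_left nhdsWithin_le_nhds
    exact ge_of_tendsto hcont (Filter.eventually_of_mem self_mem_nhdsWithin
      (fun ε hε => key ε hε))
  -- conclude
  clear_value M
  clear key hx hxc hd hdM hcompact hf hf0 hM
  have hE : (0:ℝ) < Real.exp (c*t) := Real.exp_pos _
  have he1 : Real.exp (c*t) * Real.exp (-c*t) = 1 := by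
    rw [← Real.exp_add]; norm_num
  have h4 : Real.exp (c*t) * Real.exp (-c*t) * ‖x 0‖ = ‖x 0‖ := by rw [he1]; ring
  have h3 : 0 ≤ M/c := div_nonneg hM0 hc.le
  have target' : ‖x 0‖ + M/c * (Real.exp (c*t) - 1)
      ≤ Real.exp (c*t) * (Real.exp (-c*t) * ‖x 0‖ + 1/c * M) := by
    have expand : Real.exp (c*t) * (Real.exp (-c*t) * ‖x 0‖ + 1/c * M)
        = Real.exp (c*t) * Real.exp (-c*t) * ‖x 0‖ + M/c * Real.exp (c*t) := by ring
    rw [expand, h4]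
    nlinarith [h3]
  have hmul : Real.exp (c*t) * ‖x t‖
      ≤ Real.exp (c*t) * (Real.exp (-c*t) * ‖x 0‖ + 1/c * M) := le_trans lim target'
  exact le_of_mul_le_mul_left hmul hE
end

section
/- Let c > 0, n_θ > 0, ω₀ > 0 and k_f > 0. Then there exists δ > 0 such that for all real gains k_p, k_d with |k_p| ≤ δ and |k_d| ≤ δ, the frequency-domain condition Re W̃(iω) + 1/k_f > 0 holds for all ω ∈ ℝ, where W̃(iω) = iω(k_d·iω + k_p) / ((iω + c)(ω₀² − ω² + 2 n_θ iω)). That is, the incremental-stability frequency condition can always be satisfied by choosing the control gains sufficiently small. -/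
set_option maxHeartbeats 1000000

/-- Key polynomial lower bound: `(u - a²)² + 4n²u ≥ (1+u)²/K` for an explicit `K`. -/
lemma aux_poly_bound (n_θ ω₀ : ℝ) (hn : 0 < n_θ) (hω₀ : 0 < ω₀) :
    ∀ u : ℝ, 0 ≤ u →
      (1 + u)^2 ≤ ((2 + 4*ω₀^4) / (min (2*n_θ^2*ω₀^2) (ω₀^4/4)) + 4) *
        ((u - ω₀^2)^2 + 4*n_θ^2*u) := by
  intro u hu
  set p := min (2*n_θ^2*ω₀^2) (ω₀^4/4) with hpdef
  have hp : 0 < p := lt_min (by positivity) (by positivity)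
  have hPp : p ≤ (u - ω₀^2)^2 + 4*n_θ^2*u := by
    rcases le_total u (ω₀^2/2) with h | h
    · have hmin : p ≤ ω₀^4/4 := min_le_right _ _
      have h2 : (ω₀^2/2)^2 ≤ (u - ω₀^2)^2 := by nlinarith
      nlinarith [mul_nonneg (mul_nonneg (by norm_num : (0:ℝ) ≤ 4) (sq_nonneg n_θ)) hu]
    · have hmin : p ≤ 2*n_θ^2*ω₀^2 := min_le_left _ _
      nlinarith [sq_nonneg (u - ω₀^2), mul_nonneg (sq_nonneg n_θ) (by linarith : 0 ≤ u - ω₀^2/2)]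
  have h1 : (1 + u)^2 ≤ 2 + 4*ω₀^4 + 4*(u - ω₀^2)^2 := by
    nlinarith [sq_nonneg (u - 1), sq_nonneg (u - 2*ω₀^2)]
  have h2 : (2 + 4*ω₀^4) ≤ (2 + 4*ω₀^4)/p * ((u - ω₀^2)^2 + 4*n_θ^2*u) := by
    rw [div_mul_eq_mul_div, le_div_iff₀ hp]
    exact mul_le_mul_of_nonneg_left hPp (by positivity)
  have h3 : 4*(u - ω₀^2)^2 ≤ 4*((u - ω₀^2)^2 + 4*n_θ^2*u) := by
    nlinarith [mul_nonneg (mul_nonneg (by norm_num : (0:ℝ) ≤ 4) (sq_nonneg n_θ)) hu]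
  linarith [h1, h2, h3]

/-- The frequency-domain condition `Re W̃(iω) + 1/k_f > 0`
(for all `ω ∈ ℝ`) can always be satisfied by choosing the control gains `k_p, k_d`
sufficiently small: there is `δ > 0` such that it holds whenever `|k_p| ≤ δ` and
`|k_d| ≤ δ`. -/
theorem frequency_condition_holds_for_small_gains
    (c n_θ ω₀ k_f : ℝ) (hc : 0 < c) (hn : 0 < n_θ) (hω₀ : 0 < ω₀) (hk_f : 0 < k_f) :
    ∃ δ : ℝ, 0 < δ ∧ ∀ k_p k_d : ℝ, |k_p| ≤ δ → |k_d| ≤ δ →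
      ∀ ω : ℝ,
        (Complex.I * (ω : ℂ) * ((k_d : ℂ) * (Complex.I * (ω : ℂ)) + (k_p : ℂ)) /
            ((Complex.I * (ω : ℂ) + (c : ℂ)) *
              ((ω₀ : ℂ) ^ 2 - (ω : ℂ) ^ 2 + 2 * (n_θ : ℂ) * Complex.I * (ω : ℂ)))).re
          + 1 / k_f > 0 := by
  set p := min (2*n_θ^2*ω₀^2) (ω₀^4/4) with hpdef
  have hp : 0 < p := lt_min (by positivity) (by positivity)
  set K := (2 + 4*ω₀^4)/p + 4 with hKdef
  have hK : 0 < K := by positivity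
  set C := c*ω₀^2 + 2*c*n_θ + ω₀^2 + c + 2*n_θ + 1 with hCdef
  have hC : 0 < C := by positivity
  refine ⟨c^2/(K*k_f*C), by positivity, ?_⟩
  intro k_p k_d hkp hkd ω
  set δ := c^2/(K*k_f*C) with hδdef
  have hδ : 0 < δ := by positivity
  have hδmul : δ * (K*k_f*C) = c^2 := div_mul_cancel₀ _ (by positivity)
  -- real quantities
  set S := k_d*((c+2*n_θ)*ω^4 - c*ω₀^2*ω^2) + k_p*((ω₀^2+2*c*n_θ)*ω^2 - ω^4) with hSdef
  set Q := (c^2+ω^2)*((ω₀^2-ω^2)^2 + 4*n_θ^2*ω^2) with hQdef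
  have hQ : (0:ℝ) < Q := by
    apply mul_pos (by positivity)
    rcases eq_or_ne ω 0 with h | h
    · simp [h]; positivity
    · have hω2 : 0 < ω^2 := by positivity
      nlinarith [sq_nonneg (ω₀^2 - ω^2), mul_pos (pow_pos hn 2) hω2]
  -- the real part equals S / Q
  have hns : Complex.normSq ((Complex.I * (ω : ℂ) + (c : ℂ)) *
          ((ω₀ : ℂ) ^ 2 - (ω : ℂ) ^ 2 + 2 * (n_θ : ℂ) * Complex.I * (ω : ℂ))) = Q := by
    simp [hQdef, Complex.normSq_apply, Complex.mul_re, Complex.mul_im, Complex.add_re,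
      Complex.add_im, Complex.sub_re, Complex.sub_im, ← Complex.ofReal_pow]
    ring
  have hre : (Complex.I * (ω : ℂ) * ((k_d : ℂ) * (Complex.I * (ω : ℂ)) + (k_p : ℂ)) /
            ((Complex.I * (ω : ℂ) + (c : ℂ)) *
              ((ω₀ : ℂ) ^ 2 - (ω : ℂ) ^ 2 + 2 * (n_θ : ℂ) * Complex.I * (ω : ℂ)))).re
      = S / Q := by
    rw [Complex.div_re, ← add_div, hns, div_eq_div_iff (ne_of_gt hQ) (ne_of_gt hQ),
      hSdef, hQdef]
    simp [Complex.mul_re, Complex.mul_im, Complex.add_re, Complex.add_im,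
      Complex.sub_re, Complex.sub_im, ← Complex.ofReal_pow]
    ring_nf
    exact Or.inl trivial
  -- bounds coming from |k_p| ≤ δ, |k_d| ≤ δ
  have hkd' := abs_le.mp hkd
  have hkp' := abs_le.mp hkp
  have hA1 : |(c+2*n_θ)*ω^4 - c*ω₀^2*ω^2| ≤ (c+2*n_θ)*ω^4 + c*ω₀^2*ω^2 := by
    calc |(c+2*n_θ)*ω^4 - c*ω₀^2*ω^2| ≤ |(c+2*n_θ)*ω^4| + |c*ω₀^2*ω^2| := abs_sub _ _
    _ = (c+2*n_θ)*ω^4 + c*ω₀^2*ω^2 := by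
        rw [abs_of_nonneg (by positivity), abs_of_nonneg (by positivity)]
  have hA2 : |(ω₀^2+2*c*n_θ)*ω^2 - ω^4| ≤ (ω₀^2+2*c*n_θ)*ω^2 + ω^4 := by
    calc |(ω₀^2+2*c*n_θ)*ω^2 - ω^4| ≤ |(ω₀^2+2*c*n_θ)*ω^2| + |ω^4| := abs_sub _ _
    _ = (ω₀^2+2*c*n_θ)*ω^2 + ω^4 := by
        rw [abs_of_nonneg (by positivity), abs_of_nonneg (by positivity)]
  have b1 : -(δ * ((c+2*n_θ)*ω^4 + c*ω₀^2*ω^2)) ≤ k_d*((c+2*n_θ)*ω^4 - c*ω₀^2*ω^2) := by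
    have h1 := neg_abs_le (k_d*((c+2*n_θ)*ω^4 - c*ω₀^2*ω^2))
    have h2 : |k_d*((c+2*n_θ)*ω^4 - c*ω₀^2*ω^2)| ≤ δ * ((c+2*n_θ)*ω^4 + c*ω₀^2*ω^2) := by
      rw [abs_mul]
      exact mul_le_mul hkd hA1 (abs_nonneg _) hδ.le
    linarith
  have b2 : -(δ * ((ω₀^2+2*c*n_θ)*ω^2 + ω^4)) ≤ k_p*((ω₀^2+2*c*n_θ)*ω^2 - ω^4) := by
    have h1 := neg_abs_le (k_p*((ω₀^2+2*c*n_θ)*ω^2 - ω^4))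
    have h2 : |k_p*((ω₀^2+2*c*n_θ)*ω^2 - ω^4)| ≤ δ * ((ω₀^2+2*c*n_θ)*ω^2 + ω^4) := by
      rw [abs_mul]
      exact mul_le_mul hkp hA2 (abs_nonneg _) hδ.le
    linarith
  -- key inequality: 0 < S*k_f + Q
  have hPK := aux_poly_bound n_θ ω₀ hn hω₀ (ω^2) (sq_nonneg ω)
  have hPu : (0:ℝ) ≤ (ω^2 - ω₀^2)^2 + 4*n_θ^2*ω^2 := by positivity
  have hQlow : c^2 * ((ω^2 - ω₀^2)^2 + 4*n_θ^2*ω^2) ≤ Q := by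
    rw [hQdef]
    nlinarith [mul_nonneg (sq_nonneg ω) hPu]
  have hBC : (c+2*n_θ)*ω^4 + c*ω₀^2*ω^2 + ((ω₀^2+2*c*n_θ)*ω^2 + ω^4) ≤ C*(ω^2+ω^4) := by
    rw [hCdef]
    nlinarith [mul_nonneg (by positivity : (0:ℝ) ≤ c*ω₀^2+ω₀^2+2*c*n_θ) (by positivity : (0:ℝ) ≤ ω^4),
      mul_nonneg (by positivity : (0:ℝ) ≤ c+2*n_θ+1) (sq_nonneg ω)]
  have hBC' : δ*((c+2*n_θ)*ω^4 + c*ω₀^2*ω^2 + ((ω₀^2+2*c*n_θ)*ω^2 + ω^4)) ≤ δ*(C*(ω^2+ω^4)) :=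
    mul_le_mul_of_nonneg_left hBC hδ.le
  have hSlow : -(δ * C * (ω^2 + ω^4)) ≤ S := by
    rw [hSdef]
    nlinarith [b1, b2, hBC']
  have key : 0 < S * k_f + Q := by
    -- multiply by K > 0
    have hmul : 0 < (S * k_f + Q) * K := by
      have e1 : δ * C * (ω^2 + ω^4) * k_f * K = c^2 * (ω^2 + ω^4) := by
        linear_combination (ω^2 + ω^4) * hδmul
      have e2 : c^2 * ((1 + ω^2)^2) ≤ c^2 * (K * ((ω^2 - ω₀^2)^2 + 4*n_θ^2*ω^2)) :=
        mul_le_mul_of_nonneg_left hPK (sq_nonneg c)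
      have e3 : c^2 * ((ω^2 - ω₀^2)^2 + 4*n_θ^2*ω^2) * K ≤ Q * K :=
        mul_le_mul_of_nonneg_right hQlow hK.le
      have e4 : -(δ * C * (ω^2 + ω^4)) * k_f * K ≤ S * k_f * K := by
        apply mul_le_mul_of_nonneg_right _ hK.le
        exact mul_le_mul_of_nonneg_right hSlow hk_f.le
      linarith [e1, e2, e3, e4, mul_nonneg (sq_nonneg c) (sq_nonneg ω),
        (by positivity : (0:ℝ) < c^2)]
    by_contra h
    push_neg at h
    nlinarith [hmul, h, hK]
  rw [hre]
  have heq : S / Q + 1 / k_f = (S * k_f + Q) / (Q * k_f) := by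
    field_simp
  rw [heq]
  exact div_pos key (mul_pos hQ hk_f)
end

section
/- Let A be an n×n real Hurwitz matrix, B ∈ ℝⁿ a column vector, C a row covector on ℝⁿ, and k_f > 0. Assume Re( C (iωI − A)⁻¹ B ) < 1/k_f for all ω ∈ ℝ. Then for every k ∈ [0, k_f], the matrix A + k·B·C (where B·C denotes the rank-one n×n matrix given by the outer product of the column B with the row C) is Hurwitz; i.e., the frequency condition guarantees closed-loop stability for every linear gain h(y) = k y with k in the sector [0, k_f]. -/
open Matrix

open Polynomial Filter Complex Asymptotics Bornology Topology

set_option linter.unnecessarySimpa false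


private lemma norm_eval_le_aux (p : ℂ[X]) {z : ℂ} (hz : 1 ≤ ‖z‖) :
    ‖p.eval z‖ ≤ (∑ k ∈ Finset.range (p.natDegree + 1), ‖p.coeff k‖) * ‖z‖ ^ p.natDegree := by
  rw [eval_eq_sum_range, Finset.sum_mul]
  refine (norm_sum_le _ _).trans (Finset.sum_le_sum fun i hi => ?_)
  rw [norm_mul, norm_pow]
  exact mul_le_mul_of_nonneg_left
    (pow_le_pow_right₀ hz (Nat.lt_succ_iff.mp (Finset.mem_range.mp hi)))
    (norm_nonneg _)

private lemma tendsto_ratio_aux {p q : ℂ[X]} (hq : q.Monic) (hpq : p.degree < q.degree) :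
    Tendsto (fun z => (q.eval z)⁻¹ * p.eval z) (cobounded ℂ) (𝓝 0) := by
  rcases eq_or_ne p 0 with rfl | hp
  · simpa using tendsto_const_nhds
  have hN : p.natDegree < q.natDegree := natDegree_lt_natDegree hp hpq
  set N := q.natDegree with hNdef
  have hN1 : 1 ≤ N := Nat.one_le_iff_ne_zero.mpr (by omega)
  set r : ℂ[X] := q - X ^ N with hrdef
  have hrd : r.natDegree ≤ N - 1 := by
    rcases eq_or_ne r 0 with h0 | h0
    · rw [h0]; simp
    · have hdlt : r.degree < q.degree := by
        refine degree_sub_lt ?_ hq.ne_zero ?_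
        · rw [degree_X_pow, degree_eq_natDegree hq.ne_zero]
        · rw [hq.leadingCoeff, (monic_X_pow N).leadingCoeff]
      have : r.natDegree < N := by
        rw [degree_eq_natDegree hq.ne_zero] at hdlt
        exact (natDegree_lt_iff_degree_lt h0).mpr hdlt
      omega
  set S := ∑ k ∈ Finset.range (p.natDegree + 1), ‖p.coeff k‖ with hSdef
  set T := ∑ k ∈ Finset.range (r.natDegree + 1), ‖r.coeff k‖ with hTdef
  have hS0 : 0 ≤ S := Finset.sum_nonneg fun _ _ => norm_nonneg _
  have hT0 : 0 ≤ T := Finset.sum_nonneg fun _ _ => norm_nonneg _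
  have hev : ∀ᶠ z in cobounded ℂ, ‖(q.eval z)⁻¹ * p.eval z‖ ≤ 2 * S / ‖z‖ := by
    filter_upwards [tendsto_norm_cobounded_atTop.eventually
      (eventually_ge_atTop (max 1 (2 * T + 1)))] with z hz
    have hz1 : 1 ≤ ‖z‖ := le_trans (le_max_left _ _) hz
    have hzT : 2 * T + 1 ≤ ‖z‖ := le_trans (le_max_right _ _) hz
    have hz0 : (0:ℝ) < ‖z‖ := lt_of_lt_of_le one_pos hz1
    have hpow : ‖z‖ ^ N = ‖z‖ ^ (N - 1) * ‖z‖ := by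
      rw [← pow_succ]; congr 1; omega
    have hpb : ‖p.eval z‖ ≤ S * ‖z‖ ^ (N - 1) := by
      refine (norm_eval_le_aux p hz1).trans ?_
      exact mul_le_mul_of_nonneg_left (pow_le_pow_right₀ hz1 (by omega)) hS0
    have hrb : ‖r.eval z‖ ≤ T * ‖z‖ ^ (N - 1) := by
      refine (norm_eval_le_aux r hz1).trans ?_
      exact mul_le_mul_of_nonneg_left (pow_le_pow_right₀ hz1 hrd) hT0
    have hqb : ‖z‖ ^ N / 2 ≤ ‖q.eval z‖ := by
      have h1 : q.eval z = z ^ N + r.eval z := by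
        rw [hrdef]; simp [eval_sub, eval_pow]
      have h2 : ‖z‖ ^ N - ‖r.eval z‖ ≤ ‖q.eval z‖ := by
        rw [h1]
        calc ‖z‖ ^ N - ‖r.eval z‖ = ‖z ^ N‖ - ‖r.eval z‖ := by rw [norm_pow]
          _ ≤ ‖z ^ N + r.eval z‖ := by
              have := norm_add_le (z ^ N + r.eval z) (-(r.eval z))
              simp only [add_neg_cancel_right, norm_neg] at this
              linarith
      have h3 : T * ‖z‖ ^ (N - 1) ≤ ‖z‖ ^ N / 2 := by
        rw [hpow]
        have hTz : T ≤ ‖z‖ / 2 := by linarith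
        have hpnn : (0:ℝ) ≤ ‖z‖ ^ (N - 1) := by positivity
        calc T * ‖z‖ ^ (N-1) ≤ ‖z‖ / 2 * ‖z‖ ^ (N-1) := mul_le_mul_of_nonneg_right hTz hpnn
          _ = ‖z‖ ^ (N-1) * ‖z‖ / 2 := by ring
      linarith
    have hq0 : (0:ℝ) < ‖q.eval z‖ := lt_of_lt_of_le (by positivity) hqb
    rw [norm_mul, norm_inv]
    calc ‖q.eval z‖⁻¹ * ‖p.eval z‖ ≤ (‖z‖ ^ N / 2)⁻¹ * (S * ‖z‖ ^ (N - 1)) := by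
          refine mul_le_mul (inv_anti₀ (by positivity) hqb) hpb (norm_nonneg _) ?_
          positivity
      _ = 2 * S / ‖z‖ := by
          have ha : (0:ℝ) < ‖z‖ ^ (N - 1) := by positivity
          rw [hpow, inv_div, eq_div_iff hz0.ne', div_mul_eq_mul_div, div_mul_eq_mul_div,
            div_eq_iff (by positivity : (0:ℝ) < ‖z‖ ^ (N - 1) * ‖z‖).ne']
          ring
  refine squeeze_zero_norm' hev ?_
  have : Tendsto (fun z : ℂ => ‖z‖⁻¹) (cobounded ℂ) (𝓝 0) :=
    tendsto_norm_cobounded_atTop.inv_tendsto_atTop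
  simpa [div_eq_mul_inv] using this.const_mul (2 * S)


private lemma natDegree_adjugate_charmatrix_le {m : ℕ} (M : Matrix (Fin m) (Fin m) ℂ)
    (i j : Fin m) : ((charmatrix M).adjugate i j).natDegree ≤ m - 1 := by
  rw [adjugate_apply, Matrix.det_apply']
  refine natDegree_sum_le_of_forall_le _ _ fun σ _ => ?_
  refine (natDegree_mul_le).trans ?_
  rw [natDegree_intCast, zero_add]
  refine (natDegree_prod_le _ _).trans ?_
  have hterm : ∀ k : Fin m,
      (((charmatrix M).updateRow j (Pi.single i 1)) (σ k) k).natDegree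
        ≤ if σ k = j then 0 else 1 := by
    intro k
    rw [Matrix.updateRow_apply]
    split_ifs with h
    · rcases eq_or_ne k i with rfl | hk
      · simp
      · simp [Pi.single_apply, hk]
    · rcases eq_or_ne (σ k) k with he | he
      · rw [he, charmatrix_apply_eq]
        exact (natDegree_X_sub_C _).le
      · rw [charmatrix_apply_ne _ _ _ he]
        simp
  refine (Finset.sum_le_sum fun k _ => hterm k).trans ?_
  have h1 : (∑ k : Fin m, if σ k = j then (1:ℕ) else 0) = 1 := by
    have he : ∀ k : Fin m, (if σ k = j then (1:ℕ) else 0) = if k = σ.symm j then 1 else 0 := by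
      intro k
      congr 1
      · simp only [eq_iff_iff]
        constructor
        · intro h; rw [← h]; simp
        · intro h; rw [h]; simp
    simp only [he]
    simp
  have h2 : (∑ k : Fin m, if σ k = j then (0:ℕ) else 1)
      + (∑ k : Fin m, if σ k = j then (1:ℕ) else 0) = m := by
    rw [← Finset.sum_add_distrib]
    have : ∀ k : Fin m, ((if σ k = j then (0:ℕ) else 1) + if σ k = j then (1:ℕ) else 0) = 1 := by
      intro k; split_ifs <;> rfl
    simp only [this]
    simp
  omega

/-- Under the Hurwitz and frequency-domain assumptions of the
circle criterion, for every linear gain `k ∈ [0, k_f]` the closed-loop matrix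
`A + k B C` (with `B C` the outer product of the column `B` and the row `C`) is
Hurwitz. -/
theorem frequency_condition_implies_linear_sector_stability
    (n : ℕ) (A : Matrix (Fin n) (Fin n) ℝ) (B C : Fin n → ℝ) (k_f : ℝ)
    (hk_f : 0 < k_f)
    (hHurwitz : ∀ μ ∈ spectrum ℂ (A.map (fun a : ℝ => (a : ℂ))), μ.re < 0)
    (hfreq : ∀ ω : ℝ,
      ((fun i => (C i : ℂ)) ⬝ᵥ
        (((Complex.I * (ω : ℂ)) • (1 : Matrix (Fin n) (Fin n) ℂ)
            - A.map (fun a : ℝ => (a : ℂ)))⁻¹ *ᵥ fun i => (B i : ℂ))).re < 1 / k_f) :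
    ∀ k ∈ Set.Icc (0 : ℝ) k_f,
      ∀ μ ∈ spectrum ℂ ((A + k • vecMulVec B C).map (fun a : ℝ => (a : ℂ))),
        μ.re < 0 := by
  classical
  set A' : Matrix (Fin n) (Fin n) ℂ := A.map (fun a : ℝ => (a : ℂ)) with hA'def
  set Bc : Fin n → ℂ := fun i => (B i : ℂ) with hBcdef
  set Cc : Fin n → ℂ := fun i => (C i : ℂ) with hCcdef
  set q : Polynomial ℂ := A'.charpoly with hqdef
  set adjP : Matrix (Fin n) (Fin n) (Polynomial ℂ) := (charmatrix A').adjugate with hadjdef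
  set p : Polynomial ℂ := ∑ i, ∑ j, Polynomial.C (Cc i * Bc j) * adjP i j with hpdef
  set g : ℂ → ℂ := fun z => (q.eval z)⁻¹ * p.eval z with hgdef
  -- charmatrix evaluation
  have hmap : ∀ z : ℂ, (charmatrix A').map (evalRingHom z) = z • 1 - A' := by
    intro z; ext i j
    rcases eq_or_ne i j with rfl | h
    · simp [charmatrix_apply_eq, Matrix.one_apply, Matrix.sub_apply, Matrix.smul_apply]
    · simp [charmatrix_apply_ne _ _ _ h, Matrix.one_apply_ne h, Matrix.sub_apply,
        Matrix.smul_apply]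
  have hdet : ∀ z : ℂ, (z • (1 : Matrix (Fin n) (Fin n) ℂ) - A').det = q.eval z := by
    intro z
    rw [← hmap z, ← RingHom.mapMatrix_apply, ← RingHom.map_det]
    rfl
  -- resolvent formula
  have hG : ∀ z : ℂ, Cc ⬝ᵥ ((z • (1 : Matrix (Fin n) (Fin n) ℂ) - A')⁻¹ *ᵥ Bc) = g z := by
    intro z
    rw [Matrix.inv_def, hdet z, Ring.inverse_eq_inv, ← hmap z, ← RingHom.mapMatrix_apply,
      ← RingHom.map_adjugate, RingHom.mapMatrix_apply,
      Matrix.smul_mulVec, dotProduct_smul, smul_eq_mul, hgdef]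
    congr 1
    rw [hpdef, eval_finset_sum]
    simp only [dotProduct, mulVec, eval_finset_sum, Matrix.map_apply, coe_evalRingHom]
    refine Finset.sum_congr rfl fun i _ => ?_
    rw [Finset.mul_sum]
    refine Finset.sum_congr rfl fun j _ => ?_
    rw [eval_mul, eval_C]
    ring
  -- q has no roots in closed RHP
  have hqne : ∀ z : ℂ, 0 ≤ z.re → q.eval z ≠ 0 := by
    intro z hz h0
    have hmem : z ∈ spectrum ℂ A' := by
      rw [spectrum.mem_iff, Algebra.algebraMap_eq_smul_one]
      intro hU
      rw [Matrix.isUnit_iff_isUnit_det, isUnit_iff_ne_zero, hdet z] at hU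
      exact hU h0
    exact absurd hz (not_le.mpr (hHurwitz z hmem))
  -- degrees
  have hqmonic : q.Monic := A'.charpoly_monic
  have hdegq : q.degree = (n : WithBot ℕ) := by
    rw [hqdef, Matrix.charpoly_degree_eq_dim]; simp
  have hdeg : p.degree < q.degree := by
    rcases Nat.eq_zero_or_pos n with rfl | hn
    · have : p = 0 := by rw [hpdef]; simp
      rw [this, hdegq]
      exact (bot_lt_iff_ne_bot.mpr (by simp))
    · have hple : p.natDegree ≤ n - 1 := by
        refine natDegree_sum_le_of_forall_le _ _ fun i _ => ?_
        refine natDegree_sum_le_of_forall_le _ _ fun j _ => ?_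
        refine (natDegree_mul_le).trans ?_
        rw [natDegree_C, zero_add]
        exact natDegree_adjugate_charmatrix_le A' i j
      calc p.degree ≤ (p.natDegree : WithBot ℕ) := degree_le_natDegree
        _ ≤ ((n - 1 : ℕ) : WithBot ℕ) := by exact_mod_cast hple
        _ < (n : WithBot ℕ) := by exact_mod_cast Nat.sub_lt hn one_pos
        _ = q.degree := hdegq.symm
  have hg0 : Tendsto g (cobounded ℂ) (𝓝 0) := tendsto_ratio_aux hqmonic hdeg
  -- gap on imaginary axis
  obtain ⟨δ, hδ0, hgap⟩ : ∃ δ > 0, ∀ ω : ℝ, (g (Complex.I * ω)).re ≤ 1 / k_f - δ := by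
    have hφlt : ∀ ω : ℝ, (g (Complex.I * ω)).re < 1 / k_f := by
      intro ω
      have h := hfreq ω
      rwa [hG (Complex.I * ω)] at h
    have hcont : Continuous fun ω : ℝ => (g (Complex.I * ω)).re := by
      have h1 : Continuous fun ω : ℝ => (Complex.I * (ω : ℂ)) :=
        continuous_const.mul Complex.continuous_ofReal
      have h2 : Continuous fun ω : ℝ => Polynomial.eval (Complex.I * (ω : ℂ)) q :=
        q.continuous.comp h1
      have h3 : Continuous fun ω : ℝ => Polynomial.eval (Complex.I * (ω : ℂ)) p :=
        p.continuous.comp h1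
      have h4 : Continuous fun ω : ℝ => g (Complex.I * ω) := by
        rw [hgdef]
        exact (h2.inv₀ fun ω => hqne _ (by simp)).mul h3
      exact Complex.continuous_re.comp h4
    have hIcob : Tendsto (fun ω : ℝ => Complex.I * (ω : ℂ)) (cocompact ℝ) (cobounded ℂ) := by
      rw [← comap_norm_atTop, tendsto_comap_iff]
      have he : (norm ∘ fun ω : ℝ => Complex.I * (ω : ℂ)) = fun ω : ℝ => ‖ω‖ := by
        funext ω; simp
      rw [he]
      exact tendsto_norm_cocompact_atTop
    have hφ0 : Tendsto (fun ω : ℝ => (g (Complex.I * ω)).re) (cocompact ℝ) (𝓝 0) := by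
      have h5 := (Complex.continuous_re.tendsto 0).comp (hg0.comp hIcob)
      simpa [Function.comp_def] using h5
    have hhalf : (0 : ℝ) < 1 / (2 * k_f) := by positivity
    have hev : ∀ᶠ ω : ℝ in cocompact ℝ, (g (Complex.I * ω)).re < 1 / (2 * k_f) :=
      hφ0.eventually_lt_const hhalf
    obtain ⟨K, hKc, hKsub⟩ := mem_cocompact.mp hev
    have hK'c : IsCompact (K ∪ {0}) := hKc.union isCompact_singleton
    obtain ⟨ω₀, hω₀K, hmax⟩ := hK'c.exists_isMaxOn ⟨0, Or.inr rfl⟩ hcont.continuousOn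
    refine ⟨min (1 / (2 * k_f)) (1 / k_f - (g (Complex.I * ω₀)).re),
      lt_min hhalf (by linarith [hφlt ω₀]), fun ω => ?_⟩
    by_cases hω : ω ∈ K ∪ {0}
    · have h2 : (g (Complex.I * ω)).re ≤ (g (Complex.I * ω₀)).re := hmax hω
      have h3 : min (1 / (2 * k_f)) (1 / k_f - (g (Complex.I * ω₀)).re)
          ≤ 1 / k_f - (g (Complex.I * ω₀)).re := min_le_right _ _
      linarith
    · have h2 : (g (Complex.I * ω)).re < 1 / (2 * k_f) := hKsub fun h => hω (Or.inl h)
      have h3 : min (1 / (2 * k_f)) (1 / k_f - (g (Complex.I * ω₀)).re)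
          ≤ 1 / (2 * k_f) := min_le_left _ _
      have h4 : 1 / (2 * k_f) + 1 / (2 * k_f) = 1 / k_f := by
        rw [← add_div, div_eq_div_iff (by positivity) hk_f.ne']; ring
      linarith
  -- Phragmen-Lindelof
  have hPL : ∀ z : ℂ, 0 ≤ z.re → (g z).re ≤ 1 / k_f - δ := by
    have hU : IsOpen {z : ℂ | q.eval z ≠ 0} :=
      isOpen_compl_singleton.preimage q.continuous
    set f : ℂ → ℂ := fun z => Complex.exp (k_f * g z) with hfdef
    have hdiffU : DifferentiableOn ℂ f {z : ℂ | q.eval z ≠ 0} := by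
      intro z hz
      refine DifferentiableAt.differentiableWithinAt ?_
      have hg : DifferentiableAt ℂ g z := by
        rw [hgdef]
        exact (q.differentiableAt.inv hz).mul p.differentiableAt
      exact (hg.const_mul _).cexp
    have hsub : closure {z : ℂ | 0 < z.re} ⊆ {z : ℂ | q.eval z ≠ 0} := by
      rw [Complex.closure_setOf_lt_re]
      exact fun z hz => hqne z hz
    have hd : DiffContOnCl ℂ f {z : ℂ | 0 < z.re} :=
      ⟨hdiffU.mono (subset_closure.trans hsub), hdiffU.continuousOn.mono hsub⟩
    have hnorm : ∀ w : ℂ, ‖f w‖ = Real.exp (k_f * (g w).re) := by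
      intro w
      rw [hfdef]
      rw [Complex.norm_exp, Complex.re_ofReal_mul]
    have hb1 : ∀ w : ℂ, ‖g w‖ ≤ 1 → ‖f w‖ ≤ Real.exp k_f := by
      intro w hw
      rw [hnorm w, Real.exp_le_exp]
      have h5 : (g w).re ≤ 1 := le_trans (Complex.re_le_norm _) hw
      calc k_f * (g w).re ≤ k_f * 1 := mul_le_mul_of_nonneg_left h5 hk_f.le
        _ = k_f := mul_one _
    have hev1 : ∀ᶠ w in cobounded ℂ, ‖g w‖ ≤ 1 := by
      filter_upwards [hg0.norm.eventually_lt_const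
        (by norm_num : ‖(0:ℂ)‖ < 1)] with w hw using hw.le
    have hexp : ∃ c < (2 : ℝ), ∃ Bb : ℝ,
        f =O[cobounded ℂ ⊓ 𝓟 {z : ℂ | 0 < z.re}]
          fun z => Real.exp (Bb * ‖z‖ ^ c) := by
      refine ⟨1, one_lt_two, 0, IsBigO.of_bound (Real.exp k_f) ?_⟩
      filter_upwards [hev1.filter_mono inf_le_left] with w hw
      simpa using hb1 w hw
    have hrealcob : Tendsto (fun x : ℝ => (x : ℂ)) atTop (cobounded ℂ) := by
      rw [← comap_norm_atTop, tendsto_comap_iff]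
      have he : (norm ∘ fun x : ℝ => (x : ℂ)) = fun x : ℝ => |x| := by funext x; simp
      rw [he]
      exact tendsto_abs_atTop_atTop
    have hre : IsBoundedUnder (· ≤ ·) atTop fun x : ℝ => ‖f x‖ := by
      refine ⟨Real.exp k_f, ?_⟩
      rw [eventually_map]
      filter_upwards [hrealcob.eventually hev1] with x hx using hb1 _ hx
    have him : ∀ x : ℝ, ‖f ((x : ℂ) * Complex.I)‖ ≤ Real.exp (k_f * (1 / k_f - δ)) := by
      intro x
      rw [hnorm, Real.exp_le_exp]
      refine mul_le_mul_of_nonneg_left ?_ hk_f.le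
      rw [mul_comm ((x : ℂ)) Complex.I]
      exact hgap x
    intro z hz
    have hple := PhragmenLindelof.right_half_plane_of_bounded_on_real hd hexp hre him hz
    rw [hnorm, Real.exp_le_exp] at hple
    exact (mul_le_mul_iff_right₀ hk_f).mp hple
  -- final argument
  rintro k ⟨hk0, hkf⟩ μ hμ
  by_contra hre0
  push_neg at hre0
  rcases eq_or_lt_of_le hk0 with rfl | hkpos
  · have hA : A + (0:ℝ) • vecMulVec B C = A := by simp
    rw [hA] at hμ
    exact absurd (hHurwitz μ hμ) (not_lt.mpr hre0)
  · set W : Matrix (Fin n) (Fin n) ℂ := vecMulVec Bc Cc with hWdef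
    have hmapM : (A + k • vecMulVec B C).map (fun a : ℝ => (a : ℂ)) = A' + (k : ℂ) • W := by
      ext i j
      simp [Matrix.map_apply, Matrix.add_apply, Matrix.smul_apply, vecMulVec_apply,
        hA'def, hWdef, hBcdef, hCcdef]
    rw [hmapM] at hμ
    have hmem := spectrum.mem_iff.mp hμ
    rw [Algebra.algebraMap_eq_smul_one] at hmem
    have hdet0 : (μ • (1 : Matrix (Fin n) (Fin n) ℂ) - (A' + (k : ℂ) • W)).det = 0 := by
      by_contra h0
      exact hmem ((Matrix.isUnit_iff_isUnit_det _).mpr (isUnit_iff_ne_zero.mpr h0))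
    set M : Matrix (Fin n) (Fin n) ℂ := μ • 1 - A' with hMdef
    have hMdet : M.det = q.eval μ := hdet μ
    have hq0' : q.eval μ ≠ 0 := hqne μ hre0
    have hMunit : IsUnit M.det := by
      rw [hMdet]; exact isUnit_iff_ne_zero.mpr hq0'
    have hfact : μ • (1 : Matrix (Fin n) (Fin n) ℂ) - (A' + (k : ℂ) • W)
        = M * (1 - (k : ℂ) • (M⁻¹ * W)) := by
      rw [Matrix.mul_sub, Matrix.mul_one, Matrix.mul_smul, ← Matrix.mul_assoc,
        Matrix.mul_nonsing_inv _ hMunit, Matrix.one_mul, sub_add_eq_sub_sub, hMdef]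
    have hdetprod : (1 - (k : ℂ) • (M⁻¹ * W)).det = 1 - (k : ℂ) * g μ := by
      have hW : W = Matrix.replicateCol Unit Bc * Matrix.replicateRow Unit Cc := vecMulVec_eq Unit Bc Cc
      have hcolneg : Matrix.replicateCol Unit (-((k : ℂ) • (M⁻¹ *ᵥ Bc)))
          = -Matrix.replicateCol Unit ((k : ℂ) • (M⁻¹ *ᵥ Bc)) := by
        ext i j; simp
      rw [hW, ← Matrix.mul_assoc, ← Matrix.replicateCol_mulVec, ← Matrix.smul_mul, ← Matrix.replicateCol_smul,
        sub_eq_add_neg, ← Matrix.neg_mul, ← hcolneg, Matrix.det_one_add_replicateCol_mul_replicateRow]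
      rw [dotProduct_neg, dotProduct_smul, smul_eq_mul]
      have hGμ : Cc ⬝ᵥ (M⁻¹ *ᵥ Bc) = g μ := by
        rw [hMdef]; exact hG μ
      rw [hGμ]
      ring
    have hzero : (1 : ℂ) - (k : ℂ) * g μ = 0 := by
      have h6 := hdet0
      rw [hfact, Matrix.det_mul] at h6
      rcases mul_eq_zero.mp h6 with h | h
      · exact absurd (hMdet ▸ h) hq0'
      · rw [hdetprod] at h; exact h
    have hgμ : g μ = ((k : ℂ))⁻¹ := by
      refine eq_inv_of_mul_eq_one_left ?_
      rw [mul_comm]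
      exact (sub_eq_zero.mp hzero).symm
    have hreμ : (g μ).re = k⁻¹ := by
      rw [hgμ, ← Complex.ofReal_inv, Complex.ofReal_re]
    have h1 := hPL μ hre0
    rw [hreμ] at h1
    have h2 : 1 / k_f ≤ k⁻¹ := by
      rw [one_div]
      exact inv_anti₀ hkpos hkf
    linarith
end
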